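/- arXiv:1012.3921 — 4 statements merged into one kernel-verified Lean document; each statement's English description precedes it below -/
import Mathlib

section
/- For the potential V_s(x) = -sech²(x+s) - sech²(-x+s) with 0 ≤ s ≤ s* := (1/2)·arccosh(2), the derivative satisfies V_s'(x) > 0 for all x > 0; that is, V_s is strictly increasing on (0,∞). -/
open Real

noncomputable def arccosh (x : ℝ) : ℝ := Real.log (x + Real.sqrt (x ^ 2 - 1))

noncomputable def sech (x : ℝ) : ℝ := 1 / Real.cosh x

noncomputable def Vpot (s x : ℝ) : ℝ := -(sech (x + s)) ^ 2 - (sech (-x + s)) ^ 2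

lemma key_ineq (p q r t : ℝ) (hq : q^2 = 1 + p^2) (ht : t^2 = 1 + r^2)
    (hqpos : 0 < q) (htpos : 0 < t)
    (hS : 0 < p*t + r*q) (hc2 : q*t - p*r ≤ 2) :
    0 < p*t^3 + r*q^3 := by
  set c := q*t - p*r with hc
  set C := q*t + p*r with hC
  have h1 : C * c = 1 + p^2 + r^2 := by
    simp only [hc, hC]; linear_combination t^2 * hq + (1 + p^2) * ht
  have h2 : C^2 - (p*t + r*q)^2 = 1 := by
    simp only [hC]; linear_combination (t^2 - r^2) * hq + ht
  have hCc : 0 < C * c := by rw [h1]; positivity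
  have hcpos : 0 < c := by
    rcases le_or_gt (p*r) 0 with h | h
    · have : 0 < q*t := mul_pos hqpos htpos
      simp only [hc]; linarith
    · have hCpos : 0 < C := by simp only [hC]; positivity
      nlinarith
  have hCpos : 0 < C := by nlinarith
  have hC1 : 1 < C := by nlinarith [sq_nonneg (p*t + r*q)]
  have hid : p*t^3 + r*q^3 = (p*t + r*q) * (1 + p*r*c) := by
    simp only [hc]; linear_combination (p*t - p^2*q*r) * ht + (r*q - p*t*r^2) * hq
  rw [hid]
  have h3 : p*r = (C - c)/2 := by simp only [hc, hC]; ring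
  have : 0 < 1 + p*r*c := by
    rw [h3]
    nlinarith [mul_pos hcpos (sub_pos.2 hC1)]
  positivity

lemma Vpot_hasDerivAt (s x : ℝ) :
    HasDerivAt (Vpot s)
      (2 * Real.sinh (x+s) / Real.cosh (x+s) ^ 3 + 2 * Real.sinh (x-s) / Real.cosh (x-s) ^ 3) x := by
  have hc1 : Real.cosh (x + s) ≠ 0 := (Real.cosh_pos _).ne'
  have hc2 : Real.cosh (-x + s) ≠ 0 := (Real.cosh_pos _).ne'
  have h1 : HasDerivAt (fun y : ℝ => Real.cosh (y + s)) (Real.sinh (x + s)) x := by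
    simpa using ((hasDerivAt_id x).add_const s).cosh
  have h2 : HasDerivAt (fun y : ℝ => Real.cosh (-y + s)) (-Real.sinh (-x + s)) x := by
    simpa using (((hasDerivAt_id x).neg).add_const s).cosh
  have h1' := ((h1.inv hc1).pow 2).neg
  have h2' := ((h2.inv hc2).pow 2).neg
  have h := h1'.add h2'
  have heq : (Vpot s) = fun y : ℝ => -((fun y => (Real.cosh (y + s))⁻¹) y ^ 2) + -((fun y => (Real.cosh (-y + s))⁻¹) y ^ 2) := by
    funext y
    simp [Vpot, sech]
    ring
  rw [heq]
  convert h using 1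
  · rfl
  · rfl
  · funext y
    simp
  have e1 : Real.cosh (x - s) = Real.cosh (-x + s) := by
    rw [← Real.cosh_neg]; ring_nf
  have e2 : Real.sinh (x - s) = -Real.sinh (-x + s) := by
    rw [← Real.sinh_neg]; ring_nf
  rw [e1, e2]
  simp only [Pi.inv_apply, Nat.cast_ofNat]
  field_simp
  linear_combination (-(Real.sinh (x + s) * Real.cosh (-x + s) ^ 3)) * mul_inv_cancel₀ hc1 + (Real.cosh (x + s) ^ 3 * Real.sinh (-x + s)) * mul_inv_cancel₀ hc2

lemma cosh_bound (s : ℝ) (hs0 : 0 ≤ s) (hs1 : s ≤ (1 / 2) * arccosh 2) :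
    Real.cosh (2 * s) ≤ 2 := by
  have h3 : (0:ℝ) < Real.sqrt 3 := Real.sqrt_pos.2 (by norm_num)
  have hx : (0:ℝ) < 2 + Real.sqrt 3 := by linarith
  have hinv : (2 + Real.sqrt 3)⁻¹ = 2 - Real.sqrt 3 := by
    have h3' : Real.sqrt 3 ^ 2 = 3 := Real.sq_sqrt (by norm_num)
    have h32 : Real.sqrt 3 < 2 := by nlinarith
    field_simp
    nlinarith
  have hval : Real.cosh (arccosh 2) = 2 := by
    unfold arccosh
    norm_num
    rw [Real.cosh_log hx, hinv]
    ring
  have hmono : Real.cosh (2*s) ≤ Real.cosh (arccosh 2) := by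
    rw [Real.cosh_le_cosh]
    have : 0 ≤ arccosh 2 := by nlinarith
    rw [abs_of_nonneg (by linarith), abs_of_nonneg this]
    linarith
  linarith [hval ▸ hmono]

/-- For `0 ≤ s ≤ s* = arccosh 2 / 2`, the potential `V_s` has positive derivative
for all `x > 0`, i.e. it is strictly increasing on `(0, ∞)`. -/
theorem stmt0 (s : ℝ) (hs0 : 0 ≤ s) (hs1 : s ≤ (1 / 2) * arccosh 2) :
    (∀ x : ℝ, 0 < x → 0 < deriv (Vpot s) x) ∧
      StrictMonoOn (Vpot s) (Set.Ioi (0 : ℝ)) := by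
  have hderiv : ∀ x : ℝ, 0 < x → 0 < deriv (Vpot s) x := by
    intro x hx
    rw [(Vpot_hasDerivAt s x).deriv]
    set p := Real.sinh (x + s)
    set q := Real.cosh (x + s)
    set r := Real.sinh (x - s)
    set t := Real.cosh (x - s)
    have hqpos : 0 < q := Real.cosh_pos _
    have htpos : 0 < t := Real.cosh_pos _
    have hq : q^2 = 1 + p^2 := by
      have := Real.cosh_sq_sub_sinh_sq (x + s); linarith
    have ht : t^2 = 1 + r^2 := by
      have := Real.cosh_sq_sub_sinh_sq (x - s); linarith
    have hS : 0 < p*t + r*q := by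
      have h2x : 0 < Real.sinh (2*x) := Real.sinh_pos_iff.2 (by linarith)
      have : Real.sinh (2*x) = p*t + r*q := by
        have : (2:ℝ)*x = (x+s) + (x-s) := by ring
        rw [this, Real.sinh_add]; ring
      linarith [this ▸ h2x]
    have hc2 : q*t - p*r ≤ 2 := by
      have : Real.cosh (2*s) = q*t - p*r := by
        have h2s : (2:ℝ)*s = (x+s) - (x-s) := by ring
        rw [h2s, Real.cosh_sub]
      linarith [cosh_bound s hs0 hs1, this]
    have hnum := key_ineq p q r t hq ht hqpos htpos hS hc2
    have heq : 2 * p / q ^ 3 + 2 * r / t ^ 3 = 2 * (p*t^3 + r*q^3) / (q^3 * t^3) := by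
      field_simp
    rw [heq]
    positivity
  refine ⟨hderiv, ?_⟩
  apply strictMonoOn_of_deriv_pos (convex_Ioi 0)
  · exact fun x _ => (Vpot_hasDerivAt s x).differentiableAt.continuousAt.continuousWithinAt
  · intro x hx
    rw [interior_Ioi] at hx
    exact hderiv x hx
end

section
/- Pohozaev-type identity: if φ ∈ H²(ℝ) is a real solution of -φ'' + V(x)φ + σ|φ|^{2p}φ + Eφ = 0 with V ∈ L^∞, x·V'(x) ∈ L^∞, V differentiable a.e., and φ decays so that all boundary terms vanish, then -‖φ'‖²_{L²} + ∫ (V(x) + xV'(x))|φ(x)|² dx + (σ/(p+1))‖φ‖_{L^{2p+2}}^{2p+2} = -E‖φ‖²_{L²}. -/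
open Real MeasureTheory Filter

/-- Pohozaev-type identity: if `φ ∈ H²(ℝ)` is a real solution of
`-φ'' + Vφ + σ|φ|^{2p}φ + Eφ = 0` with `V ∈ L^∞`, `xV'(x) ∈ L^∞`, `V` differentiable,
and `φ` decays so that all boundary terms vanish, then
`-‖φ'‖² + ∫ (V + xV')|φ|² + (σ/(p+1))‖φ‖_{2p+2}^{2p+2} = -E‖φ‖²`. -/
theorem stmt4 (p σ E : ℝ) (hp : 0 < p)
    (V φ : ℝ → ℝ)
    (hVdiff : Differentiable ℝ V)
    (hVbdd : ∃ M : ℝ, ∀ x, |V x| ≤ M)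
    (hxV'bdd : ∃ M : ℝ, ∀ x, |x * deriv V x| ≤ M)
    (hφ : ContDiff ℝ 2 φ)
    (hsol : ∀ x, -(deriv (deriv φ) x) + V x * φ x + σ * |φ x| ^ (2 * p) * φ x
      + E * φ x = 0)
    (hint1 : Integrable (fun x => (deriv φ x) ^ 2))
    (hint2 : Integrable (fun x => (φ x) ^ 2))
    (hint3 : Integrable (fun x => |φ x| ^ (2 * p + 2)))
    (hint4 : Integrable (fun x => (V x + x * deriv V x) * (φ x) ^ 2))
    (hbdryTop : Tendsto (fun x : ℝ =>
      x * ((deriv φ x) ^ 2 + (φ x) ^ 2 + |φ x| ^ (2 * p + 2) + |V x| * (φ x) ^ 2))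
      atTop (nhds 0))
    (hbdryBot : Tendsto (fun x : ℝ =>
      x * ((deriv φ x) ^ 2 + (φ x) ^ 2 + |φ x| ^ (2 * p + 2) + |V x| * (φ x) ^ 2))
      atBot (nhds 0)) :
    -(∫ x, (deriv φ x) ^ 2) + (∫ x, (V x + x * deriv V x) * (φ x) ^ 2)
      + (σ / (p + 1)) * ∫ x, |φ x| ^ (2 * p + 2)
      = -E * ∫ x, (φ x) ^ 2 := by
  have hp1 : p + 1 ≠ 0 := by positivity
  set c : ℝ := σ / (p + 1) with hc
  -- smoothness facts
  have hφd : Differentiable ℝ φ := hφ.differentiable (by norm_num)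
  have hφ1 : ∀ x, HasDerivAt φ (deriv φ x) x := fun x => (hφd x).hasDerivAt
  have hφ' : Differentiable ℝ (deriv φ) := by
    have h := (contDiff_succ_iff_deriv (n := 1)).mp (by exact_mod_cast hφ)
    exact h.2.2.differentiable (by norm_num)
  have hφ2 : ∀ x, HasDerivAt (deriv φ) (deriv (deriv φ) x) x := fun x => (hφ' x).hasDerivAt
  -- the main function and its derivative
  set f' : ℝ → ℝ := fun x => -(deriv φ x)^2 + (V x + x * deriv V x) * (φ x)^2
      + c * |φ x| ^ (2*p+2) + E * (φ x)^2 with hf'def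
  set G : ℝ → ℝ := fun x => x * (-(deriv φ x)^2 + V x * (φ x)^2 + c * |φ x| ^ (2*p+2)
      + E * (φ x)^2) with hGdef
  have habs2 : ∀ t : ℝ, |t| ^ (2*p+2) = (t^2) ^ (p+1) := by
    intro t
    rw [← sq_abs t, ← Real.rpow_natCast |t| 2, ← Real.rpow_mul (abs_nonneg t)]
    norm_num
    ring_nf
  have habs1 : ∀ t : ℝ, |t| ^ (2*p) = (t^2) ^ p := by
    intro t
    rw [← sq_abs t, ← Real.rpow_natCast |t| 2, ← Real.rpow_mul (abs_nonneg t)]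
    norm_num
  have hderiv : ∀ x, HasDerivAt G (f' x) x := by
    intro x
    have hsq : HasDerivAt (fun y => (φ y)^2) (2 * φ x ^ 1 * deriv φ x) x := (hφ1 x).pow 2
    have hdsq : HasDerivAt (fun y => (deriv φ y)^2) (2 * deriv φ x ^ 1 * deriv (deriv φ) x) x :=
      (hφ2 x).pow 2
    have hrpow : HasDerivAt (fun y => ((φ y)^2) ^ (p+1))
        (2 * φ x ^ 1 * deriv φ x * (p+1) * ((φ x)^2) ^ (p+1-1)) x :=
      hsq.rpow_const (p := p+1) (Or.inr (by linarith))
    have hVφ : HasDerivAt (fun y => V y * (φ y)^2)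
        (deriv V x * (φ x)^2 + V x * (2 * φ x ^ 1 * deriv φ x)) x :=
      (hVdiff x).hasDerivAt.mul hsq
    have hH : HasDerivAt (fun y => -(deriv φ y)^2 + V y * (φ y)^2 + c * ((φ y)^2) ^ (p+1)
        + E * (φ y)^2)
        (-(2 * deriv φ x ^ 1 * deriv (deriv φ) x)
          + (deriv V x * (φ x)^2 + V x * (2 * φ x ^ 1 * deriv φ x))
          + c * (2 * φ x ^ 1 * deriv φ x * (p+1) * ((φ x)^2) ^ (p+1-1))
          + E * (2 * φ x ^ 1 * deriv φ x)) x :=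
      ((hdsq.neg.add hVφ).add (hrpow.const_mul c)).add (hsq.const_mul E)
    have hG' : HasDerivAt G
        (1 * (-(deriv φ x)^2 + V x * (φ x)^2 + c * ((φ x)^2) ^ (p+1) + E * (φ x)^2)
         + x * (-(2 * deriv φ x ^ 1 * deriv (deriv φ) x)
          + (deriv V x * (φ x)^2 + V x * (2 * φ x ^ 1 * deriv φ x))
          + c * (2 * φ x ^ 1 * deriv φ x * (p+1) * ((φ x)^2) ^ (p+1-1))
          + E * (2 * φ x ^ 1 * deriv φ x))) x := by
      have := (hasDerivAt_id x).mul hH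
      simp only [hGdef, habs2]
      exact this
    have heq : (1 * (-(deriv φ x)^2 + V x * (φ x)^2 + c * ((φ x)^2) ^ (p+1) + E * (φ x)^2)
         + x * (-(2 * deriv φ x ^ 1 * deriv (deriv φ) x)
          + (deriv V x * (φ x)^2 + V x * (2 * φ x ^ 1 * deriv φ x))
          + c * (2 * φ x ^ 1 * deriv φ x * (p+1) * ((φ x)^2) ^ (p+1-1))
          + E * (2 * φ x ^ 1 * deriv φ x))) = f' x := by
      have key := hsol x
      rw [habs1] at key
      have hcp : c * (p + 1) = σ := by rw [hc]; exact div_mul_cancel₀ σ hp1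
      rw [hf'def]
      simp only [habs2]
      rw [show p + 1 - 1 = p from by ring]
      linear_combination (2*x*deriv φ x) * key
        + (2*x*φ x*deriv φ x*((φ x)^2)^p) * hcp
    rw [heq] at hG'
    exact hG'
  have hintf' : Integrable f' := by
    rw [hf'def]
    exact ((hint1.neg.add hint4).add (hint3.const_mul c)).add (hint2.const_mul E)
  set S : ℝ → ℝ := fun x => (deriv φ x) ^ 2 + (φ x) ^ 2 + |φ x| ^ (2 * p + 2)
      + |V x| * (φ x) ^ 2 with hSdef
  have hS0 : ∀ x, 0 ≤ S x := by
    intro x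
    have h3 : (0:ℝ) ≤ |φ x| ^ (2 * p + 2) := Real.rpow_nonneg (abs_nonneg _) _
    have : (0:ℝ) ≤ |V x| * (φ x) ^ 2 := mul_nonneg (abs_nonneg _) (sq_nonneg _)
    simp only [hSdef]
    nlinarith [sq_nonneg (deriv φ x), sq_nonneg (φ x)]
  have hbound : ∀ x, ‖G x‖ ≤ (1 + |c| + |E|) * ‖x * S x‖ := by
    intro x
    have hA : (0:ℝ) ≤ |φ x| ^ (2 * p + 2) := Real.rpow_nonneg (abs_nonneg _) _
    have hH : |(-(deriv φ x)^2 + V x * (φ x)^2 + c * |φ x| ^ (2*p+2) + E * (φ x)^2)|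
        ≤ (1 + |c| + |E|) * S x := by
      have hc0 : (0:ℝ) ≤ |c| := abs_nonneg _
      have hE0 : (0:ℝ) ≤ |E| := abs_nonneg _
      have hV0 : (0:ℝ) ≤ |V x| := abs_nonneg _
      have hVu : V x * (φ x)^2 ≤ |V x| * (φ x)^2 :=
        mul_le_mul_of_nonneg_right (le_abs_self _) (sq_nonneg _)
      have hVl : -(|V x| * (φ x)^2) ≤ V x * (φ x)^2 := by
        have := mul_le_mul_of_nonneg_right (neg_abs_le (V x)) (sq_nonneg (φ x))
        linarith [this]
      have hcu : c * |φ x| ^ (2*p+2) ≤ |c| * |φ x| ^ (2*p+2) :=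
        mul_le_mul_of_nonneg_right (le_abs_self _) hA
      have hcl : -(|c| * |φ x| ^ (2*p+2)) ≤ c * |φ x| ^ (2*p+2) := by
        have := mul_le_mul_of_nonneg_right (neg_abs_le c) hA
        linarith [this]
      have hEu : E * (φ x)^2 ≤ |E| * (φ x)^2 :=
        mul_le_mul_of_nonneg_right (le_abs_self _) (sq_nonneg _)
      have hEl : -(|E| * (φ x)^2) ≤ E * (φ x)^2 := by
        have := mul_le_mul_of_nonneg_right (neg_abs_le E) (sq_nonneg (φ x))
        linarith [this]
      rw [abs_le]
      simp only [hSdef]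
      constructor
      · nlinarith [sq_nonneg (φ x), sq_nonneg (deriv φ x),
          mul_nonneg hV0 (sq_nonneg (φ x)), mul_nonneg hc0 hA, mul_nonneg hE0 (sq_nonneg (φ x))]
      · nlinarith [sq_nonneg (φ x), sq_nonneg (deriv φ x),
          mul_nonneg hV0 (sq_nonneg (φ x)), mul_nonneg hc0 hA, mul_nonneg hE0 (sq_nonneg (φ x))]
    have hGx : ‖G x‖ = |x| * |(-(deriv φ x)^2 + V x * (φ x)^2 + c * |φ x| ^ (2*p+2)
        + E * (φ x)^2)| := by
      rw [hGdef]; exact abs_mul _ _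
    have hxS : ‖x * S x‖ = |x| * S x := by
      rw [Real.norm_eq_abs, abs_mul, abs_of_nonneg (hS0 x)]
    rw [hGx, hxS, mul_comm (1 + |c| + |E|) (|x| * S x), mul_assoc]
    exact mul_le_mul_of_nonneg_left (by linarith [hH]) (abs_nonneg x)
  have hlimT : Tendsto (fun x => (1 + |c| + |E|) * ‖x * S x‖) atTop (nhds 0) := by
    have := (hbdryTop.norm).const_mul (1 + |c| + |E|)
    simpa using this
  have hlimB : Tendsto (fun x => (1 + |c| + |E|) * ‖x * S x‖) atBot (nhds 0) := by
    have := (hbdryBot.norm).const_mul (1 + |c| + |E|)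
    simpa using this
  have hGtop : Tendsto G atTop (nhds 0) := squeeze_zero_norm hbound hlimT
  have hGbot : Tendsto G atBot (nhds 0) := squeeze_zero_norm hbound hlimB
  have hzero : ∫ x, f' x = 0 := by
    have := integral_of_hasDerivAt_of_tendsto hderiv hintf' hGbot hGtop
    simpa using this
  have hsplit : ∫ x, f' x = -(∫ x, (deriv φ x) ^ 2)
      + (∫ x, (V x + x * deriv V x) * (φ x) ^ 2)
      + c * (∫ x, |φ x| ^ (2 * p + 2)) + E * (∫ x, (φ x) ^ 2) := by
    have i1 : Integrable (fun x : ℝ => -(deriv φ x)^2) := hint1.neg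
    have i14 : Integrable (fun x : ℝ => -(deriv φ x)^2
        + (V x + x * deriv V x) * (φ x)^2) := i1.add hint4
    have i134 : Integrable (fun x : ℝ => -(deriv φ x)^2
        + (V x + x * deriv V x) * (φ x)^2 + c * |φ x| ^ (2*p+2)) :=
      i14.add (hint3.const_mul c)
    have i2 : Integrable (fun x : ℝ => E * (φ x)^2) := hint2.const_mul E
    rw [hf'def, integral_add i134 i2, integral_add i14 (hint3.const_mul c),
      integral_add i1 hint4, integral_neg, integral_const_mul, integral_const_mul]
  rw [hsplit] at hzero
  linarith
end

section
/- With C := 2‖V‖_∞ + ‖xV'‖_∞, any real H² solution φ of the stationary NLS satisfies the two-sided bound 2(E - C)‖φ‖²_{L²} ≤ -σ·((p+2)/(p+1))·‖φ‖_{L^{2p+2}}^{2p+2} ≤ 2(E + C)‖φ‖²_{L²}. -/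
open Real MeasureTheory Filter

private lemma my_ftc_zero (g g' : ℝ → ℝ) (hd : ∀ x, HasDerivAt g (g' x) x)
    (hi : Integrable g') (ht : Tendsto g atTop (nhds 0)) (hb : Tendsto g atBot (nhds 0)) :
    ∫ x, g' x = 0 := by
  have h1 : ∫ x in Set.Iic (0:ℝ), g' x = g 0 - 0 :=
    integral_Iic_of_hasDerivAt_of_tendsto' (fun x _ => hd x) hi.integrableOn hb
  have h2 : ∫ x in Set.Ioi (0:ℝ), g' x = 0 - g 0 :=
    integral_Ioi_of_hasDerivAt_of_tendsto' (fun x _ => hd x) hi.integrableOn ht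
  have h3 := intervalIntegral.integral_Iic_add_Ioi (b := (0:ℝ)) (f := g') (μ := volume)
    hi.integrableOn hi.integrableOn
  linarith

private lemma my_rpow_comp (q : ℝ) (hq : 2 ≤ q) (f : ℝ → ℝ) (f' t : ℝ)
    (hf : HasDerivAt f f' t) :
    HasDerivAt (fun x => |f x| ^ q) (q * |f t| ^ (q - 2) * f t * f') t := by
  have key : ∀ s : ℝ, ∀ c : ℝ, (s ^ 2 : ℝ) ^ c = |s| ^ (2 * c) := by
    intro s c
    rw [← sq_abs s, ← Real.rpow_natCast |s| 2, ← Real.rpow_mul (abs_nonneg s)]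
    norm_num
  have h1 : HasDerivAt (fun x : ℝ => f x ^ 2) (2 * f t ^ 1 * f') t := hf.pow 2
  have h3 : HasDerivAt (fun x : ℝ => ((f x ^ 2 : ℝ)) ^ (q/2))
      ((2 * f t ^ 1 * f') * (q/2) * ((f t)^2) ^ (q/2 - 1)) t :=
    h1.rpow_const (Or.inr (by linarith))
  have e1 : (fun x : ℝ => ((f x ^ 2 : ℝ)) ^ (q/2)) = fun x : ℝ => |f x| ^ q := by
    funext s; rw [key (f s) (q/2)]; congr 1; ring
  have e2 : (2 * f t ^ 1 * f') * (q/2) * ((f t)^2) ^ (q/2 - 1)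
      = q * |f t| ^ (q - 2) * f t * f' := by
    rw [key (f t) (q/2 - 1)]
    have h : 2 * (q/2 - 1) = q - 2 := by ring
    rw [h]; ring
  rw [← e1, ← e2]
  exact h3

set_option maxHeartbeats 1600000 in
/-- With `C = 2‖V‖_∞ + ‖xV'‖_∞`, any real `H²` solution `φ` of the stationary NLS
satisfies `2(E-C)‖φ‖² ≤ -σ (p+2)/(p+1) ‖φ‖_{2p+2}^{2p+2} ≤ 2(E+C)‖φ‖²`. -/
theorem stmt7 (p σ E MV MxV : ℝ) (hp : 0 < p) (hσ : σ < 0)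
    (V φ : ℝ → ℝ)
    (hVdiff : Differentiable ℝ V)
    (hVbdd : ∀ x, |V x| ≤ MV)
    (hxV'bdd : ∀ x, |x * deriv V x| ≤ MxV)
    (hφ : ContDiff ℝ 2 φ)
    (hsol : ∀ x, -(deriv (deriv φ) x) + V x * φ x + σ * |φ x| ^ (2 * p) * φ x
      + E * φ x = 0)
    (hint1 : Integrable (fun x => (deriv φ x) ^ 2))
    (hint2 : Integrable (fun x => (φ x) ^ 2))
    (hint3 : Integrable (fun x => |φ x| ^ (2 * p + 2)))
    (hint4 : Integrable (fun x => (2 * V x + x * deriv V x) * (φ x) ^ 2))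
    (hbdryTop : Tendsto (fun x : ℝ =>
      |φ x * deriv φ x| + |x| * ((deriv φ x) ^ 2 + (φ x) ^ 2 + |φ x| ^ (2 * p + 2)
        + |V x| * (φ x) ^ 2)) atTop (nhds 0))
    (hbdryBot : Tendsto (fun x : ℝ =>
      |φ x * deriv φ x| + |x| * ((deriv φ x) ^ 2 + (φ x) ^ 2 + |φ x| ^ (2 * p + 2)
        + |V x| * (φ x) ^ 2)) atBot (nhds 0)) :
    2 * (E - (2 * MV + MxV)) * (∫ x, (φ x) ^ 2)
      ≤ -σ * ((p + 2) / (p + 1)) * (∫ x, |φ x| ^ (2 * p + 2)) ∧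
    -σ * ((p + 2) / (p + 1)) * (∫ x, |φ x| ^ (2 * p + 2))
      ≤ 2 * (E + (2 * MV + MxV)) * (∫ x, (φ x) ^ 2) := by
  -- basic regularity
  have hφ1 : Differentiable ℝ φ := hφ.differentiable two_ne_zero
  have hφc1 : ContDiff ℝ 1 (deriv φ) := by
    have h : ContDiff ℝ ((1:ℕ) + 1) φ := by exact_mod_cast hφ
    exact (contDiff_succ_iff_deriv.mp h).2.2
  have hφ'd : Differentiable ℝ (deriv φ) := hφc1.differentiable one_ne_zero
  -- abs-power algebra
  have habs : ∀ t : ℝ, |t| ^ (2*p) * (t*t) = |t| ^ (2*p+2) := by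
    intro t
    rcases eq_or_ne t 0 with rfl | htne
    · rw [abs_zero, Real.zero_rpow (by positivity : (2*p : ℝ) ≠ 0),
        Real.zero_rpow (by positivity : (2*p+2 : ℝ) ≠ 0)]
      norm_num
    · have h0 : 0 < |t| := abs_pos.2 htne
      rw [Real.rpow_add h0]
      congr 1
      rw [show ((2:ℝ)) = ((2:ℕ):ℝ) by norm_num, Real.rpow_natCast, sq_abs, sq]
  -- derivative of |φ|^(2p+2)
  have hR : ∀ x, HasDerivAt (fun y => |φ y| ^ (2*p+2))
      ((2*p+2) * |φ x| ^ (2*p) * φ x * deriv φ x) x := by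
    intro x
    have h := my_rpow_comp (2*p+2) (by linarith) φ (deriv φ x) x (hφ1 x).hasDerivAt
    have e : 2*p+2-2 = 2*p := by ring
    rw [e] at h
    exact h
  -- integrability of V φ²
  have hWint : Integrable (fun x => V x * (φ x)^2) :=
    hint2.bdd_mul hVdiff.continuous.aestronglyMeasurable
      (ae_of_all _ fun x => by simpa [Real.norm_eq_abs] using hVbdd x)
  -- Identity 1 : ∫ (φ')² + V φ² + σ|φ|^{2p+2} + E φ² = 0
  have hd1 : ∀ x, HasDerivAt (fun y => φ y * deriv φ y)
      ((deriv φ x)^2 + (V x * (φ x)^2 + (σ * |φ x| ^ (2*p+2) + E * (φ x)^2))) x := by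
    intro x
    have h := (hφ1 x).hasDerivAt.mul (hφ'd x).hasDerivAt
    refine h.congr_deriv ?_
    linear_combination -(φ x) * hsol x + σ * habs (φ x)
  have hg1int : Integrable (fun x => (deriv φ x)^2
      + (V x * (φ x)^2 + (σ * |φ x| ^ (2*p+2) + E * (φ x)^2))) :=
    hint1.add (hWint.add ((hint3.const_mul σ).add (hint2.const_mul E)))
  have hb1Top : Tendsto (fun y => φ y * deriv φ y) atTop (nhds 0) := by
    apply squeeze_zero_norm _ hbdryTop
    intro x
    have h1 : 0 ≤ |x| * ((deriv φ x)^2 + (φ x)^2 + |φ x| ^ (2*p+2) + |V x| * (φ x)^2) := by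
      have := Real.rpow_nonneg (abs_nonneg (φ x)) (2*p+2)
      positivity
    simp only [Real.norm_eq_abs]
    linarith
  have hb1Bot : Tendsto (fun y => φ y * deriv φ y) atBot (nhds 0) := by
    apply squeeze_zero_norm _ hbdryBot
    intro x
    have h1 : 0 ≤ |x| * ((deriv φ x)^2 + (φ x)^2 + |φ x| ^ (2*p+2) + |V x| * (φ x)^2) := by
      have := Real.rpow_nonneg (abs_nonneg (φ x)) (2*p+2)
      positivity
    simp only [Real.norm_eq_abs]
    linarith
  have hI1' : ∫ x, ((deriv φ x)^2
      + (V x * (φ x)^2 + (σ * |φ x| ^ (2*p+2) + E * (φ x)^2))) = 0 :=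
    my_ftc_zero _ _ hd1 hg1int hb1Top hb1Bot
  have hI1 : (∫ x, (deriv φ x)^2) + ((∫ x, V x * (φ x)^2)
      + (σ * (∫ x, |φ x| ^ (2*p+2)) + E * (∫ x, (φ x)^2))) = 0 := by
    have s1 : ∫ x, ((deriv φ x)^2
        + (V x * (φ x)^2 + (σ * |φ x| ^ (2*p+2) + E * (φ x)^2)))
        = (∫ x, (deriv φ x)^2)
          + ∫ x, (V x * (φ x)^2 + (σ * |φ x| ^ (2*p+2) + E * (φ x)^2)) :=
      integral_add hint1 (hWint.add ((hint3.const_mul σ).add (hint2.const_mul E)))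
    have s2 : ∫ x, (V x * (φ x)^2 + (σ * |φ x| ^ (2*p+2) + E * (φ x)^2))
        = (∫ x, V x * (φ x)^2) + ∫ x, (σ * |φ x| ^ (2*p+2) + E * (φ x)^2) :=
      integral_add hWint ((hint3.const_mul σ).add (hint2.const_mul E))
    have s3 : ∫ x, (σ * |φ x| ^ (2*p+2) + E * (φ x)^2)
        = (∫ x, σ * |φ x| ^ (2*p+2)) + ∫ x, E * (φ x)^2 :=
      integral_add (hint3.const_mul σ) (hint2.const_mul E)
    have s4 : ∫ x, σ * |φ x| ^ (2*p+2) = σ * ∫ x, |φ x| ^ (2*p+2) :=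
      integral_const_mul σ _
    have s5 : ∫ x, E * (φ x)^2 = E * ∫ x, (φ x)^2 := integral_const_mul E _
    linarith [hI1', s1, s2, s3, s4, s5]
  -- Identity 2 (Pohozaev)
  have hd2 : ∀ x, HasDerivAt (fun y => (p+1) * (y * V y * (φ y)^2 + E * (y * (φ y)^2)
        - y * (deriv φ y)^2) + σ * (y * |φ y| ^ (2*p+2)))
      ((p+1) * (((2 * V x + x * deriv V x) * (φ x)^2 - V x * (φ x)^2)
        + (E * (φ x)^2 - (deriv φ x)^2)) + σ * |φ x| ^ (2*p+2)) x := by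
    intro x
    have hA := ((hasDerivAt_id' (𝕜 := ℝ) x).mul (hVdiff x).hasDerivAt).mul ((hφ1 x).hasDerivAt.pow 2)
    have hB := ((hasDerivAt_id' (𝕜 := ℝ) x).mul ((hφ1 x).hasDerivAt.pow 2)).const_mul E
    have hC := (hasDerivAt_id' (𝕜 := ℝ) x).mul ((hφ'd x).hasDerivAt.pow 2)
    have hD := ((hasDerivAt_id' (𝕜 := ℝ) x).mul (hR x)).const_mul σ
    have h := (((hA.add hB).sub hC).const_mul (p+1)).add hD
    refine h.congr_deriv ?_
    simp only [Pi.pow_apply, Pi.mul_apply]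
    linear_combination (2*(p+1)*x*(deriv φ x)) * hsol x
  have hg2int : Integrable (fun x => (p+1) * (((2 * V x + x * deriv V x) * (φ x)^2
        - V x * (φ x)^2) + (E * (φ x)^2 - (deriv φ x)^2)) + σ * |φ x| ^ (2*p+2)) :=
    (((hint4.sub hWint).add ((hint2.const_mul E).sub hint1)).const_mul (p+1)).add
      (hint3.const_mul σ)
  -- boundary decay for G2
  have hG2le : ∀ x : ℝ, ‖(p+1) * (x * V x * (φ x)^2 + E * (x * (φ x)^2)
        - x * (deriv φ x)^2) + σ * (x * |φ x| ^ (2*p+2))‖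
      ≤ ((p+1) * (1 + |E|) + |σ|) * (|φ x * deriv φ x|
        + |x| * ((deriv φ x)^2 + (φ x)^2 + |φ x| ^ (2*p+2) + |V x| * (φ x)^2)) := by
    intro x
    set K := (p+1) * (1 + |E|) + |σ| with hK
    have hK1 : p + 1 ≤ K := by
      have h1 : 0 ≤ (p+1) * |E| := by positivity
      have h2 : 0 ≤ |σ| := abs_nonneg σ
      nlinarith
    have hK2 : (p+1) * |E| ≤ K := by nlinarith [abs_nonneg σ, abs_nonneg E]
    have hK3 : |σ| ≤ K := by nlinarith [abs_nonneg E]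
    have hK0 : 0 ≤ K := by positivity
    have hrnn : 0 ≤ |φ x| ^ (2*p+2) := Real.rpow_nonneg (abs_nonneg _) _
    have e1 : |x * V x * (φ x)^2| = |x| * |V x| * (φ x)^2 := by
      rw [abs_mul, abs_mul, abs_of_nonneg (sq_nonneg (φ x))]
    have e2 : |E * (x * (φ x)^2)| = |E| * (|x| * (φ x)^2) := by
      rw [abs_mul, abs_mul, abs_of_nonneg (sq_nonneg (φ x))]
    have e3 : |x * (deriv φ x)^2| = |x| * (deriv φ x)^2 := by
      rw [abs_mul, abs_of_nonneg (sq_nonneg (deriv φ x))]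
    have e4 : |x * |φ x| ^ (2*p+2)| = |x| * |φ x| ^ (2*p+2) := by
      rw [abs_mul, abs_of_nonneg hrnn]
    simp only [Real.norm_eq_abs]
    have t1 : |x * V x * (φ x)^2 + E * (x * (φ x)^2) - x * (deriv φ x)^2|
        ≤ |x| * |V x| * (φ x)^2 + |E| * (|x| * (φ x)^2) + |x| * (deriv φ x)^2 := by
      calc |x * V x * (φ x)^2 + E * (x * (φ x)^2) - x * (deriv φ x)^2|
          ≤ |x * V x * (φ x)^2 + E * (x * (φ x)^2)| + |x * (deriv φ x)^2| := abs_sub _ _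
        _ ≤ |x * V x * (φ x)^2| + |E * (x * (φ x)^2)| + |x * (deriv φ x)^2| := by
            linarith [abs_add_le (x * V x * (φ x)^2) (E * (x * (φ x)^2))]
        _ = _ := by rw [e1, e2, e3]
    have t2 : |(p+1) * (x * V x * (φ x)^2 + E * (x * (φ x)^2) - x * (deriv φ x)^2)
          + σ * (x * |φ x| ^ (2*p+2))|
        ≤ (p+1) * (|x| * |V x| * (φ x)^2 + |E| * (|x| * (φ x)^2) + |x| * (deriv φ x)^2)
          + |σ| * (|x| * |φ x| ^ (2*p+2)) := by
      calc _ ≤ |(p+1) * (x * V x * (φ x)^2 + E * (x * (φ x)^2) - x * (deriv φ x)^2)|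
            + |σ * (x * |φ x| ^ (2*p+2))| := abs_add_le _ _
        _ = (p+1) * |x * V x * (φ x)^2 + E * (x * (φ x)^2) - x * (deriv φ x)^2|
            + |σ| * (|x| * |φ x| ^ (2*p+2)) := by
            rw [abs_mul, abs_mul, e4, abs_of_nonneg (by linarith : (0:ℝ) ≤ p+1)]
        _ ≤ _ := by
            have hp1 : (0:ℝ) ≤ p + 1 := by linarith
            nlinarith [t1]
    refine t2.trans ?_
    have n1 : 0 ≤ |x| * |V x| * (φ x)^2 := by positivity
    have n2 : 0 ≤ |x| * (φ x)^2 := by positivity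
    have n3 : 0 ≤ |x| * (deriv φ x)^2 := by positivity
    have n4 : 0 ≤ |x| * |φ x| ^ (2*p+2) := mul_nonneg (abs_nonneg x) hrnn
    have n5 : 0 ≤ |φ x * deriv φ x| := abs_nonneg _
    have m1 := mul_le_mul_of_nonneg_right hK1 n1
    have m2 := mul_le_mul_of_nonneg_right hK2 n2
    have m3 := mul_le_mul_of_nonneg_right hK1 n3
    have m4 := mul_le_mul_of_nonneg_right hK3 n4
    have m5 := mul_nonneg hK0 n5
    nlinarith [m1, m2, m3, m4, m5]
  have hG2Top : Tendsto (fun x : ℝ => (p+1) * (x * V x * (φ x)^2 + E * (x * (φ x)^2)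
      - x * (deriv φ x)^2) + σ * (x * |φ x| ^ (2*p+2))) atTop (nhds 0) := by
    apply squeeze_zero_norm hG2le
    have := hbdryTop.const_mul ((p+1) * (1 + |E|) + |σ|)
    simpa only [mul_zero] using this
  have hG2Bot : Tendsto (fun x : ℝ => (p+1) * (x * V x * (φ x)^2 + E * (x * (φ x)^2)
      - x * (deriv φ x)^2) + σ * (x * |φ x| ^ (2*p+2))) atBot (nhds 0) := by
    apply squeeze_zero_norm hG2le
    have := hbdryBot.const_mul ((p+1) * (1 + |E|) + |σ|)
    simpa only [mul_zero] using this
  have hI2' : ∫ x, ((p+1) * (((2 * V x + x * deriv V x) * (φ x)^2 - V x * (φ x)^2)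
      + (E * (φ x)^2 - (deriv φ x)^2)) + σ * |φ x| ^ (2*p+2)) = 0 :=
    my_ftc_zero _ _ hd2 hg2int hG2Top hG2Bot
  have hI2 : (p+1) * (((∫ x, (2 * V x + x * deriv V x) * (φ x)^2)
      - (∫ x, V x * (φ x)^2)) + (E * (∫ x, (φ x)^2) - (∫ x, (deriv φ x)^2)))
      + σ * (∫ x, |φ x| ^ (2*p+2)) = 0 := by
    have s1 : ∫ x, ((p+1) * (((2 * V x + x * deriv V x) * (φ x)^2 - V x * (φ x)^2)
          + (E * (φ x)^2 - (deriv φ x)^2)) + σ * |φ x| ^ (2*p+2))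
        = (∫ x, (p+1) * (((2 * V x + x * deriv V x) * (φ x)^2 - V x * (φ x)^2)
          + (E * (φ x)^2 - (deriv φ x)^2))) + ∫ x, σ * |φ x| ^ (2*p+2) :=
      integral_add (((hint4.sub hWint).add ((hint2.const_mul E).sub hint1)).const_mul (p+1))
        (hint3.const_mul σ)
    have s2 : ∫ x, (p+1) * (((2 * V x + x * deriv V x) * (φ x)^2 - V x * (φ x)^2)
          + (E * (φ x)^2 - (deriv φ x)^2))
        = (p+1) * ∫ x, (((2 * V x + x * deriv V x) * (φ x)^2 - V x * (φ x)^2)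
          + (E * (φ x)^2 - (deriv φ x)^2)) :=
      integral_const_mul (p+1) _
    have s3 : ∫ x, (((2 * V x + x * deriv V x) * (φ x)^2 - V x * (φ x)^2)
          + (E * (φ x)^2 - (deriv φ x)^2))
        = (∫ x, ((2 * V x + x * deriv V x) * (φ x)^2 - V x * (φ x)^2))
          + ∫ x, (E * (φ x)^2 - (deriv φ x)^2) :=
      integral_add (hint4.sub hWint) ((hint2.const_mul E).sub hint1)
    have s4 : ∫ x, ((2 * V x + x * deriv V x) * (φ x)^2 - V x * (φ x)^2)
        = (∫ x, (2 * V x + x * deriv V x) * (φ x)^2) - ∫ x, V x * (φ x)^2 :=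
      integral_sub hint4 hWint
    have s5 : ∫ x, (E * (φ x)^2 - (deriv φ x)^2)
        = (∫ x, E * (φ x)^2) - ∫ x, (deriv φ x)^2 :=
      integral_sub (hint2.const_mul E) hint1
    have s6 : ∫ x, E * (φ x)^2 = E * ∫ x, (φ x)^2 := integral_const_mul E _
    have s7 : ∫ x, σ * |φ x| ^ (2*p+2) = σ * ∫ x, |φ x| ^ (2*p+2) :=
      integral_const_mul σ _
    rw [s1, s2, s3, s4, s5, s6, s7] at hI2'
    linarith [hI2']
  -- combine the identities
  set A := ∫ x, (deriv φ x)^2 with hA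
  set B := ∫ x, (φ x)^2 with hBdef
  set N := ∫ x, |φ x| ^ (2*p+2) with hN
  set W := ∫ x, V x * (φ x)^2 with hW
  set T := ∫ x, (2 * V x + x * deriv V x) * (φ x)^2 with hT
  have hp1 : (p:ℝ) + 1 ≠ 0 := by positivity
  have key : -σ * ((p+2)/(p+1)) * N = 2*E*B + T := by
    have e : -σ * ((p+2)/(p+1)) * N = (-σ * (p+2) * N) / (p+1) := by ring
    rw [e, div_eq_iff hp1]
    linear_combination (-1 : ℝ) * hI2 - (p+1) * hI1
  -- bound on T
  have hTle : |T| ≤ (2*MV + MxV) * B := by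
    have h6 : |T| ≤ ∫ x, |(2 * V x + x * deriv V x) * (φ x)^2| := by
      rw [hT]
      exact norm_integral_le_integral_norm (μ := volume) (fun x => (2 * V x + x * deriv V x) * (φ x)^2)
    have h7 : (∫ x, |(2 * V x + x * deriv V x) * (φ x)^2|)
        ≤ ∫ x, (2*MV + MxV) * (φ x)^2 := by
      apply integral_mono hint4.abs (hint2.const_mul _)
      intro x
      show |(2 * V x + x * deriv V x) * (φ x)^2| ≤ (2*MV + MxV) * (φ x)^2
      have ha : |2 * V x + x * deriv V x| ≤ 2*MV + MxV := by
        have := abs_add_le (2 * V x) (x * deriv V x)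
        have h1 := hVbdd x
        have h2 := hxV'bdd x
        rw [abs_mul] at this
        simp only [abs_two] at this
        linarith
      rw [abs_mul, abs_of_nonneg (sq_nonneg (φ x))]
      exact mul_le_mul_of_nonneg_right ha (sq_nonneg (φ x))
    calc |T| ≤ _ := h6
      _ ≤ _ := h7
      _ = (2*MV + MxV) * B := integral_const_mul _ _
  have hBnn : (0:ℝ) ≤ B := integral_nonneg (fun x => sq_nonneg (φ x))
  have hCnn : (0:ℝ) ≤ 2*MV + MxV := by
    have h1 := (abs_nonneg (V 0)).trans (hVbdd 0)
    have h2 := (abs_nonneg (0 * deriv V 0)).trans (hxV'bdd 0)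
    linarith
  obtain ⟨hT1, hT2⟩ := abs_le.mp hTle
  constructor
  · rw [key]
    nlinarith [mul_nonneg hCnn hBnn]
  · rw [key]
    nlinarith [mul_nonneg hCnn hBnn]
end

section
/- Let σ < 0 and let (ψ_E, E) for E ∈ (E₀, E_*) be a branch of positive solutions of the stationary NLS such that the lowest eigenvalue λ₀(E) of L_+(ψ_E, E) tends to 0 along a sequence Eₙ → E_*. Then ‖ψ_{Eₙ}‖_{L^{2p+2}}^{2p+2}/‖ψ_{Eₙ}‖²_{L²} → 0, and consequently E_* ≤ E₀, where -E₀ is the lowest eigenvalue of -∂ₓ² + V. -/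
open Real MeasureTheory Filter


lemma abs_rpow_mul_sq (p a : ℝ) (ha : 0 < a) :
    |a| ^ (2 * p) * a ^ 2 = |a| ^ (2 * p + 2) := by
  rw [abs_of_pos ha, ← Real.rpow_natCast a 2, ← Real.rpow_add ha]
  norm_num

lemma energy_identity (p σ E : ℝ) (V f : ℝ → ℝ)
    (hpos : ∀ x, 0 < f x) (hreg : ContDiff ℝ 2 f)
    (hsol : ∀ x, -(deriv (deriv f) x) + V x * f x + σ * |f x| ^ (2 * p) * f x + E * f x = 0)
    (hint1 : Integrable (fun x => (deriv f x) ^ 2))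
    (hint2 : Integrable (fun x => (f x) ^ 2))
    (hint3 : Integrable (fun x => |f x| ^ (2 * p + 2)))
    (hint4 : Integrable (fun x => V x * (f x) ^ 2))
    (hTop : Tendsto (fun x : ℝ => f x * deriv f x) atTop (nhds 0))
    (hBot : Tendsto (fun x : ℝ => f x * deriv f x) atBot (nhds 0)) :
    (∫ x, (deriv f x) ^ 2) + ((∫ x, V x * (f x) ^ 2) + σ * (∫ x, |f x| ^ (2 * p + 2))
      + E * (∫ x, (f x) ^ 2)) = 0 := by
  have hd1 : Differentiable ℝ f := hreg.differentiable (by norm_num)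
  have hd2 : Differentiable ℝ (deriv f) := by
    have h2 : ContDiff ℝ ((1 : ℕ∞) + 1) f := by
      exact_mod_cast hreg
    exact ((contDiff_succ_iff_deriv.mp h2).2.2).differentiable (by norm_num)
  have heq : ∀ x, f x * deriv (deriv f) x
      = V x * (f x) ^ 2 + σ * |f x| ^ (2 * p + 2) + E * (f x) ^ 2 := by
    intro x
    have h := hsol x
    have h2 : deriv (deriv f) x = V x * f x + σ * |f x| ^ (2 * p) * f x + E * f x := by
      linarith
    have h3 : |f x| ^ (2 * p) * (f x) ^ 2 = |f x| ^ (2 * p + 2) :=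
      abs_rpow_mul_sq p (f x) (hpos x)
    calc f x * deriv (deriv f) x
        = V x * (f x) ^ 2 + σ * (|f x| ^ (2 * p) * (f x) ^ 2) + E * (f x) ^ 2 := by
          rw [h2]; ring
      _ = _ := by rw [h3]
  have hFint : Integrable (fun x => V x * (f x) ^ 2 + σ * |f x| ^ (2 * p + 2)
      + E * (f x) ^ 2) := (hint4.add (hint3.const_mul σ)).add (hint2.const_mul E)
  have h2int : Integrable (fun x => f x * deriv (deriv f) x) :=
    hFint.congr (Filter.Eventually.of_forall fun x => (heq x).symm)
  set g' : ℝ → ℝ := fun x => deriv f x * deriv f x + f x * deriv (deriv f) x with hg'def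
  have hg : ∀ x, HasDerivAt (fun x => f x * deriv f x) (g' x) x := fun x =>
    ((hd1 x).hasDerivAt.mul (hd2 x).hasDerivAt)
  have hg'int : Integrable g' := by
    refine (hint1.add h2int).congr (Filter.Eventually.of_forall fun x => ?_)
    simp [hg'def, pow_two]
  have hIoi : ∫ x in Set.Ioi (0:ℝ), g' x = 0 - (f 0 * deriv f 0) :=
    integral_Ioi_of_hasDerivAt_of_tendsto' (fun x _ => hg x) hg'int.integrableOn hTop
  have hIic : ∫ x in Set.Iic (0:ℝ), g' x = (f 0 * deriv f 0) - 0 :=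
    integral_Iic_of_hasDerivAt_of_tendsto' (fun x _ => hg x) hg'int.integrableOn hBot
  have htot : ∫ x, g' x = 0 := by
    rw [← intervalIntegral.integral_Iic_add_Ioi hg'int.integrableOn hg'int.integrableOn,
      hIoi, hIic]; ring
  have hsplit : ∫ x, g' x = (∫ x, (deriv f x) ^ 2) + ∫ x, f x * deriv (deriv f) x := by
    rw [← integral_add hint1 h2int]
    refine integral_congr_ae (Filter.Eventually.of_forall fun x => ?_)
    simp [hg'def, pow_two]
  have hsecond : ∫ x, f x * deriv (deriv f) x
      = (∫ x, V x * (f x) ^ 2) + σ * (∫ x, |f x| ^ (2 * p + 2)) + E * (∫ x, (f x) ^ 2) := by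
    rw [integral_congr_ae (Filter.Eventually.of_forall heq),
      integral_add (f := fun x => V x * (f x) ^ 2 + σ * |f x| ^ (2 * p + 2))
        (g := fun x => E * (f x) ^ 2) (hint4.add (hint3.const_mul σ)) (hint2.const_mul E),
      integral_add (f := fun x => V x * (f x) ^ 2)
        (g := fun x => σ * |f x| ^ (2 * p + 2)) hint4 (hint3.const_mul σ),
      integral_const_mul, integral_const_mul]
  rw [hsplit, hsecond] at htot
  linarith

/-- Let `σ < 0` and `(ψ_E, E)`, `E ∈ (E₀, E_*)`, a branch of positive solutions of the
stationary NLS such that the lowest eigenvalue `λ₀(E)` of `L₊(ψ_E,E)` tends to `0`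
along a sequence `Eₙ → E_*`.  Then `‖ψ_{Eₙ}‖_{2p+2}^{2p+2}/‖ψ_{Eₙ}‖²_{L²} → 0` and
consequently `E_* ≤ E₀`, where `-E₀` is the lowest eigenvalue of `-∂ₓ² + V`. -/
theorem stmt10 (p σ E₀ Estar : ℝ) (hp : 0 < p) (hσ : σ < 0) (hE₀star : E₀ < Estar)
    (V : ℝ → ℝ) (ψ : ℝ → ℝ → ℝ) (lam0 : ℝ → ℝ) (Eseq : ℕ → ℝ)
    (hEseqmem : ∀ n, Eseq n ∈ Set.Ioo E₀ Estar)
    (hEseqlim : Tendsto Eseq atTop (nhds Estar))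
    -- the branch consists of positive `C²` solutions of the stationary NLS
    (hpos : ∀ E ∈ Set.Ioo E₀ Estar, ∀ x, 0 < ψ E x)
    (hreg : ∀ E ∈ Set.Ioo E₀ Estar, ContDiff ℝ 2 (ψ E))
    (hsol : ∀ E ∈ Set.Ioo E₀ Estar, ∀ x,
      -(deriv (deriv (ψ E)) x) + V x * ψ E x + σ * |ψ E x| ^ (2 * p) * ψ E x
        + E * ψ E x = 0)
    (hint1 : ∀ E ∈ Set.Ioo E₀ Estar, Integrable (fun x => (deriv (ψ E) x) ^ 2))
    (hint2 : ∀ E ∈ Set.Ioo E₀ Estar, Integrable (fun x => (ψ E x) ^ 2))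
    (hint3 : ∀ E ∈ Set.Ioo E₀ Estar, Integrable (fun x => |ψ E x| ^ (2 * p + 2)))
    (hint4 : ∀ E ∈ Set.Ioo E₀ Estar, Integrable (fun x => V x * (ψ E x) ^ 2))
    (hN : ∀ E ∈ Set.Ioo E₀ Estar, 0 < ∫ x, (ψ E x) ^ 2)
    (hbdry : ∀ E ∈ Set.Ioo E₀ Estar,
      Tendsto (fun x : ℝ => ψ E x * deriv (ψ E) x) atTop (nhds 0) ∧
      Tendsto (fun x : ℝ => ψ E x * deriv (ψ E) x) atBot (nhds 0))
    -- `λ₀(E)` is the lowest eigenvalue of `L₊`: min-max bound by the Rayleigh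
    -- quotient of `ψ_E` itself
    (hlam0Rayleigh : ∀ E ∈ Set.Ioo E₀ Estar,
      lam0 E * (∫ x, (ψ E x) ^ 2) ≤
        (∫ x, (deriv (ψ E) x) ^ 2) +
        ∫ x, (E + V x + σ * (2 * p + 1) * |ψ E x| ^ (2 * p)) * (ψ E x) ^ 2)
    (hlam0lim : Tendsto (fun n => lam0 (Eseq n)) atTop (nhds 0))
    -- `-E₀` is the lowest eigenvalue of `-∂ₓ² + V` (Rayleigh lower bound)
    (hE₀ : ∀ ξ : ℝ → ℝ, ContDiff ℝ 1 ξ →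
      Integrable (fun x => (ξ x) ^ 2) → Integrable (fun x => (deriv ξ x) ^ 2) →
      Integrable (fun x => V x * (ξ x) ^ 2) →
      -E₀ * (∫ x, (ξ x) ^ 2) ≤ (∫ x, (deriv ξ x) ^ 2) + ∫ x, V x * (ξ x) ^ 2) :
    Tendsto (fun n =>
      (∫ x, |ψ (Eseq n) x| ^ (2 * p + 2)) / (∫ x, (ψ (Eseq n) x) ^ 2))
      atTop (nhds 0) ∧ Estar ≤ E₀ := by
  set I : ℕ → ℝ := fun n => ∫ x, |ψ (Eseq n) x| ^ (2 * p + 2) with hIdef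
  set N : ℕ → ℝ := fun n => ∫ x, (ψ (Eseq n) x) ^ 2 with hNdef
  set Q : ℕ → ℝ := fun n => I n / N n with hQdef
  have hmem := hEseqmem
  have hNpos : ∀ n, 0 < N n := fun n => hN _ (hmem n)
  have hIpos : ∀ n, 0 ≤ I n := fun n =>
    integral_nonneg fun x => Real.rpow_nonneg (abs_nonneg _) _
  have hkey : ∀ n, (∫ x, (deriv (ψ (Eseq n)) x) ^ 2)
      + ((∫ x, V x * (ψ (Eseq n) x) ^ 2) + σ * I n + Eseq n * N n) = 0 := fun n =>
    energy_identity p σ (Eseq n) V (ψ (Eseq n)) (hpos _ (hmem n)) (hreg _ (hmem n))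
      (hsol _ (hmem n)) (hint1 _ (hmem n)) (hint2 _ (hmem n)) (hint3 _ (hmem n))
      (hint4 _ (hmem n)) (hbdry _ (hmem n)).1 (hbdry _ (hmem n)).2
  -- the Rayleigh quotient bound gives `lam0 * N ≤ 2 p σ I`
  have hRay : ∀ n, lam0 (Eseq n) * N n ≤ 2 * p * σ * I n := by
    intro n
    have hexp : (∫ x, (Eseq n + V x + σ * (2 * p + 1) * |ψ (Eseq n) x| ^ (2 * p))
        * (ψ (Eseq n) x) ^ 2)
        = Eseq n * N n + (∫ x, V x * (ψ (Eseq n) x) ^ 2) + σ * (2 * p + 1) * I n := by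
      have hpw : ∀ x, (Eseq n + V x + σ * (2 * p + 1) * |ψ (Eseq n) x| ^ (2 * p))
          * (ψ (Eseq n) x) ^ 2
          = Eseq n * (ψ (Eseq n) x) ^ 2 + V x * (ψ (Eseq n) x) ^ 2
            + (σ * (2 * p + 1)) * |ψ (Eseq n) x| ^ (2 * p + 2) := by
        intro x
        rw [← abs_rpow_mul_sq p _ (hpos _ (hmem n) x)]
        ring
      rw [integral_congr_ae (Filter.Eventually.of_forall hpw),
        integral_add (f := fun x => Eseq n * (ψ (Eseq n) x) ^ 2
            + V x * (ψ (Eseq n) x) ^ 2)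
          (g := fun x => (σ * (2 * p + 1)) * |ψ (Eseq n) x| ^ (2 * p + 2))
          (((hint2 _ (hmem n)).const_mul _).add (hint4 _ (hmem n)))
          ((hint3 _ (hmem n)).const_mul _),
        integral_add (f := fun x => Eseq n * (ψ (Eseq n) x) ^ 2)
          (g := fun x => V x * (ψ (Eseq n) x) ^ 2)
          ((hint2 _ (hmem n)).const_mul _) (hint4 _ (hmem n)),
        integral_const_mul, integral_const_mul]
    have h := hlam0Rayleigh _ (hmem n)
    rw [hexp] at h
    have hk := hkey n
    linarith
  have hc : 2 * p * σ < 0 := mul_neg_of_pos_of_neg (by positivity) hσ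
  have hQ0 : ∀ n, 0 ≤ Q n := fun n => div_nonneg (hIpos n) (hNpos n).le
  have hQle : ∀ n, Q n ≤ lam0 (Eseq n) / (2 * p * σ) := by
    intro n
    have h1 : lam0 (Eseq n) ≤ (2 * p * σ) * Q n := by
      have h2 : lam0 (Eseq n) ≤ (2 * p * σ * I n) / N n :=
        (le_div_iff₀ (hNpos n)).mpr (hRay n)
      rwa [mul_div_assoc] at h2
    exact (le_div_iff_of_neg' hc).mpr h1
  have hQlim : Tendsto Q atTop (nhds 0) := by
    have hupper : Tendsto (fun n => lam0 (Eseq n) / (2 * p * σ)) atTop (nhds 0) := by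
      simpa using hlam0lim.div_const (2 * p * σ)
    exact tendsto_of_tendsto_of_tendsto_of_le_of_le tendsto_const_nhds hupper hQ0 hQle
  refine ⟨hQlim, ?_⟩
  -- the Rayleigh bound for `-∂ₓ² + V` gives `Eseq n ≤ E₀ - σ * Q n`
  have hle : ∀ n, Eseq n ≤ E₀ - σ * Q n := by
    intro n
    have h := hE₀ (ψ (Eseq n)) ((hreg _ (hmem n)).of_le (by norm_num))
      (hint2 _ (hmem n)) (hint1 _ (hmem n)) (hint4 _ (hmem n))
    have hk := hkey n
    have h2 : (Eseq n - E₀) * N n ≤ (-σ) * I n := by linarith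
    have h3 : Eseq n - E₀ ≤ ((-σ) * I n) / N n := (le_div_iff₀ (hNpos n)).mpr h2
    rw [mul_div_assoc] at h3
    simp only [hQdef]
    linarith
  have hlim2 : Tendsto (fun n => E₀ - σ * Q n) atTop (nhds (E₀ - σ * 0)) :=
    tendsto_const_nhds.sub (tendsto_const_nhds.mul hQlim)
  rw [mul_zero, sub_zero] at hlim2
  exact le_of_tendsto_of_tendsto' hEseqlim hlim2 hle
end
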